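/- For every integer n ≥ 1, with x_j = 1 − sin²(π/(n+3))/sin²(π(j+1)/(n+3)) for 1 ≤ j ≤ n, one has (n+3)·∑_{j=1}^n L(x_j) = (π²/6)·n(n+1), where L is the Rogers dilogarithm. -/

import Mathlib

open scoped Real
open MeasureTheory Set intervalIntegral

noncomputable def rogersL (z : ℝ) : ℝ :=
  -(1 / 2) * ∫ t in (0:ℝ)..z, (Real.log (1 - t) / t + Real.log t / (1 - t))

namespace RogersAux

lemma hasDeriv_G (n : ℕ) {t : ℝ} (ht : 0 < t) :
    HasDerivAt (fun t : ℝ => t^(n+1)/((n:ℝ)+1)^2 - t^(n+1) * Real.log t/((n:ℝ)+1))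
      (t^n * (-Real.log t)) t := by
  have hn : ((n:ℝ)+1) ≠ 0 := by positivity
  have h1 : HasDerivAt (fun t : ℝ => t^(n+1)) (((n:ℝ)+1) * t^n) t := by
    simpa using hasDerivAt_pow (n+1) t
  have h2 : HasDerivAt Real.log t⁻¹ t := Real.hasDerivAt_log (ne_of_gt ht)
  have h4 := ((h1.div_const (((n:ℝ)+1)^2)).sub ((h1.mul h2).div_const ((n:ℝ)+1)))
  refine h4.congr_deriv ?_
  field_simp
  ring

lemma contG (n : ℕ) :
    Continuous (fun t:ℝ => t^(n+1)/((n:ℝ)+1)^2 - t^(n+1) * Real.log t/((n:ℝ)+1)) := by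
  have : (fun t:ℝ => t^(n+1)/((n:ℝ)+1)^2 - t^(n+1) * Real.log t/((n:ℝ)+1))
      = fun t:ℝ => t^(n+1)/((n:ℝ)+1)^2 - t^n * (t * Real.log t)/((n:ℝ)+1) := by
    funext t; ring
  rw [this]
  exact ((continuous_pow (n+1)).div_const _).sub
    (((continuous_pow n).mul Real.continuous_mul_log).div_const _)

lemma integrable_pow_neg_log (n : ℕ) :
    IntegrableOn (fun t : ℝ => t^n * (-Real.log t)) (Ioc (0:ℝ) 1) := by
  refine integrableOn_deriv_of_nonneg (contG n).continuousOn
    (fun x hx => hasDeriv_G n hx.1) (fun x hx => ?_)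
  have h1 : Real.log x ≤ 0 := Real.log_nonpos (le_of_lt hx.1) (le_of_lt hx.2)
  have h2 : (0:ℝ) ≤ x^n := le_of_lt (pow_pos hx.1 n)
  nlinarith

lemma integral_pow_neg_log (n : ℕ) :
    ∫ t in (0:ℝ)..1, t^n * (-Real.log t) = 1/((n:ℝ)+1)^2 := by
  rw [integral_eq_sub_of_hasDeriv_right_of_le zero_le_one (contG n).continuousOn
      (fun x hx => (hasDeriv_G n hx.1).hasDerivWithinAt)
      ((intervalIntegrable_iff_integrableOn_Ioc_of_le zero_le_one).2 (integrable_pow_neg_log n))]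
  have hn : ((n:ℝ)+1) ≠ 0 := by positivity
  simp [Real.log_one, zero_pow (Nat.succ_ne_zero n)]

lemma key_integral :
    ∫ t in Ioc (0:ℝ) 1, (-Real.log t) * (1-t)⁻¹ = π^2/6 := by
  set μ := volume.restrict (Ioc (0:ℝ) 1) with hμ
  set F : ℕ → ℝ → ℝ := fun n t => t^n * (-Real.log t) with hF
  have h_int : ∀ n, Integrable (F n) μ := fun n => integrable_pow_neg_log n
  have h_val : ∀ n, ∫ t, F n t ∂μ = 1/((n:ℝ)+1)^2 := by
    intro n
    rw [← integral_pow_neg_log n, intervalIntegral.integral_of_le zero_le_one]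
  have h_nonneg : ∀ n, ∀ᵐ t ∂μ, 0 ≤ F n t := by
    intro n
    refine (ae_restrict_iff' measurableSet_Ioc).2 (Filter.Eventually.of_forall fun t ht => ?_)
    have h1 : Real.log t ≤ 0 := Real.log_nonpos (le_of_lt ht.1) ht.2
    have h2 : (0:ℝ) ≤ t^n := le_of_lt (pow_pos ht.1 n)
    show (0:ℝ) ≤ t ^ n * -Real.log t
    nlinarith
  have h_norm : ∀ n, ∫ t, ‖F n t‖ ∂μ = 1/((n:ℝ)+1)^2 := by
    intro n
    rw [← h_val n]
    refine integral_congr_ae ?_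
    filter_upwards [h_nonneg n] with t ht
    exact Real.norm_of_nonneg ht
  have h_summable : Summable (fun n : ℕ => ∫ t, ‖F n t‖ ∂μ) := by
    simp only [h_norm]
    have := (summable_nat_add_iff 1).2 (Real.summable_one_div_nat_pow.2 one_lt_two)
    refine this.congr fun n => ?_
    push_cast
    ring
  have h_swap := MeasureTheory.integral_tsum_of_summable_integral_norm h_int h_summable
  have h_sum : ∑' n, ∫ t, F n t ∂μ = π^2/6 := by
    simp only [h_val]
    have h0 : HasSum (fun n : ℕ => 1/((n:ℝ)+1)^2) (π^2/6) := by
      have hz : HasSum (fun n : ℕ => 1/(n:ℝ)^2)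
          (π^2/6 + ∑ i ∈ Finset.range 1, 1/(i:ℝ)^2) := by simpa using hasSum_zeta_two
      have := (hasSum_nat_add_iff (f := fun n : ℕ => 1/(n:ℝ)^2) 1).2 hz
      refine this.congr_fun fun n => ?_
      push_cast
      ring
    exact h0.tsum_eq
  have h_ptwise : ∫ t, (∑' n, F n t) ∂μ = ∫ t, (-Real.log t) * (1-t)⁻¹ ∂μ := by
    refine integral_congr_ae ?_
    have h1 : ∀ᵐ t : ℝ, t ≠ 1 := by
      rw [ae_iff]
      have he : {a : ℝ | ¬ a ≠ 1} = {1} := by ext t; simp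
      rw [he]
      exact measure_singleton 1
    filter_upwards [ae_restrict_mem measurableSet_Ioc, ae_restrict_of_ae h1] with t ht ht1
    have ht1' : t < 1 := lt_of_le_of_ne ht.2 ht1
    have := tsum_geometric_of_lt_one (le_of_lt ht.1) ht1'
    rw [hF]
    simp only
    rw [tsum_mul_right, this]
    ring
  rw [← h_ptwise, ← h_swap, h_sum]


lemma intInt_log_Ioc : IntegrableOn Real.log (Ioc (0:ℝ) 1) := by
  have h : IntegrableOn (fun t : ℝ => -(t ^ 0 * -Real.log t)) (Ioc (0:ℝ) 1) :=
    (integrable_pow_neg_log 0).neg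
  refine h.congr_fun ?_ measurableSet_Ioc
  intro t _
  simp

lemma intInt2 : IntervalIntegrable (fun t => Real.log t / (1-t)) volume 0 1 := by
  have half : (0:ℝ) ≤ 1/2 := by norm_num
  have part1 : IntervalIntegrable (fun t => Real.log t / (1-t)) volume 0 (1/2) := by
    have hlog : IntervalIntegrable Real.log volume 0 (1/2) := by
      rw [intervalIntegrable_iff_integrableOn_Ioc_of_le half]
      exact intInt_log_Ioc.mono_set (Ioc_subset_Ioc le_rfl (by norm_num))
    have hcont : ContinuousOn (fun t : ℝ => (1-t)⁻¹) (uIcc 0 (1/2)) := by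
      refine ((continuous_const.sub continuous_id).continuousOn).inv₀ ?_
      intro x hx
      rw [uIcc_of_le half] at hx
      have : x ≤ 1/2 := hx.2
      intro h; simp at h; linarith
    have := hlog.mul_continuousOn hcont
    refine this.congr ?_
    intro t _
    simp [div_eq_mul_inv]
  have part2 : IntervalIntegrable (fun t => Real.log t / (1-t)) volume (1/2) 1 := by
    rw [intervalIntegrable_iff_integrableOn_Ioc_of_le (by norm_num : (1:ℝ)/2 ≤ 1)]
    have hmeas : AEStronglyMeasurable (fun t : ℝ => Real.log t / (1-t))
        volume := by
      refine (Measurable.aestronglyMeasurable ?_)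
      exact Real.measurable_log.div (measurable_const.sub measurable_id)
    refine Measure.integrableOn_of_bounded (M := 2) (by simp) hmeas ?_
    refine (ae_restrict_iff' measurableSet_Ioc).2 (Filter.Eventually.of_forall fun t ht => ?_)
    have ht1 : (1:ℝ)/2 < t := ht.1
    have ht2 : t ≤ 1 := ht.2
    rcases eq_or_lt_of_le ht2 with h1 | h1
    · subst h1; simp
    · have hpos : 0 < t := by linarith
      have hlt : 0 < 1 - t := by linarith
      have hlogle : -Real.log t ≤ (1-t)/t := by
        have := Real.log_le_sub_one_of_pos (show 0 < t⁻¹ by positivity)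
        rw [Real.log_inv] at this
        have h2 : t⁻¹ - 1 = (1-t)/t := by field_simp
        linarith [h2 ▸ this]
      have hlognp : Real.log t ≤ 0 := Real.log_nonpos (le_of_lt hpos) ht2
      rw [Real.norm_eq_abs, abs_div, abs_of_nonneg (le_of_lt hlt),
        abs_of_nonpos hlognp]
      rw [div_le_iff₀ hlt]
      have : (1-t)/t ≤ 2*(1-t) := by
        rw [div_le_iff₀ hpos]
        nlinarith
      linarith
  exact part1.trans part2

lemma intInt1 : IntervalIntegrable (fun t => Real.log (1-t) / t) volume 0 1 := by
  have h := intInt2.comp_sub_left 1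
  simp only [sub_sub_cancel] at h
  norm_num at h
  exact h.symm

lemma intIntf {z : ℝ} (hz0 : 0 ≤ z) (hz1 : z ≤ 1) :
    IntervalIntegrable (fun t => Real.log (1 - t) / t + Real.log t / (1 - t)) volume 0 z := by
  refine ((intInt1.add intInt2).mono_set ?_)
  rw [uIcc_of_le hz0, uIcc_of_le zero_le_one]
  exact Icc_subset_Icc le_rfl hz1

lemma int2_val : ∫ t in (0:ℝ)..1, Real.log t / (1-t) = -(π^2/6) := by
  have he : (fun t : ℝ => Real.log t / (1-t)) = fun t : ℝ => -((-Real.log t) * (1-t)⁻¹) := by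
    funext t
    rw [div_eq_mul_inv]
    ring
  rw [he, intervalIntegral.integral_of_le zero_le_one]
  rw [MeasureTheory.integral_neg, key_integral]

lemma int1_val : ∫ t in (0:ℝ)..1, Real.log (1-t) / t = -(π^2/6) := by
  have h := intervalIntegral.integral_comp_sub_left (a := 0) (b := 1)
    (fun t : ℝ => Real.log t / (1-t)) 1
  simp only [sub_sub_cancel, sub_zero, sub_self] at h
  rw [h, int2_val]

lemma rogersL_one : rogersL 1 = π^2/6 := by
  unfold rogersL
  rw [intervalIntegral.integral_add intInt1 intInt2, int1_val, int2_val]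
  ring

lemma rogersL_zero : rogersL 0 = 0 := by
  unfold rogersL
  simp

lemma rogersL_contOn : ContinuousOn rogersL (Icc 0 1) := by
  have h_int : IntegrableOn (fun t => Real.log (1 - t) / t + Real.log t / (1 - t))
      (uIcc (0:ℝ) 1) volume := by
    rw [uIcc_of_le zero_le_one, integrableOn_Icc_iff_integrableOn_Ioc]
    exact (intervalIntegrable_iff_integrableOn_Ioc_of_le zero_le_one).1 (intIntf zero_le_one le_rfl)
  have := (intervalIntegral.continuousOn_primitive_interval (a := 0) (b := 1) h_int)
  rw [uIcc_of_le zero_le_one] at this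
  exact continuousOn_const.mul this

lemma rogersL_hasDeriv {z : ℝ} (hz0 : 0 < z) (hz1 : z < 1) :
    HasDerivAt rogersL (-(1/2) * (Real.log (1 - z) / z + Real.log z / (1 - z))) z := by
  have hcont : ContinuousAt (fun t => Real.log (1 - t) / t + Real.log t / (1 - t)) z := by
    have h1 : ContinuousAt (fun t : ℝ => Real.log (1 - t)) z :=
      (Real.continuousAt_log (by linarith)).comp ((continuous_const.sub continuous_id).continuousAt)
    have h2 : ContinuousAt (fun t : ℝ => Real.log t) z := Real.continuousAt_log (ne_of_gt hz0)
    exact ((h1.div continuousAt_id (ne_of_gt hz0)).add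
      (h2.div ((continuous_const.sub continuous_id).continuousAt) (by intro hh; rw [sub_eq_zero] at hh; linarith)))
  have hmeas : StronglyMeasurableAtFilter
      (fun t => Real.log (1 - t) / t + Real.log t / (1 - t)) (nhds z) volume := by
    refine StronglyMeasurable.stronglyMeasurableAtFilter ?_
    refine Measurable.stronglyMeasurable ?_
    exact ((Real.measurable_log.comp (measurable_const.sub measurable_id)).div measurable_id).add
      (Real.measurable_log.div (measurable_const.sub measurable_id))
  have h := intervalIntegral.integral_hasDerivAt_right
    (intIntf (le_of_lt hz0) (le_of_lt hz1)) hmeas hcont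
  exact h.const_mul (-(1/2) : ℝ)

lemma rogersL_reflect {z : ℝ} (hz0 : 0 ≤ z) (hz1 : z ≤ 1) :
    rogersL z + rogersL (1 - z) = π^2/6 := by
  rcases eq_or_lt_of_le hz0 with h0 | h0
  · rw [← h0]
    norm_num [rogersL_zero, rogersL_one]
  · have hcont : ContinuousOn (fun t => rogersL t + rogersL (1-t)) (Icc 0 1) := by
    -- continuity
      refine (rogersL_contOn.mono (Icc_subset_Icc le_rfl le_rfl)).add ?_
      refine rogersL_contOn.comp ((continuous_const.sub continuous_id).continuousOn) ?_
      intro t ht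
      exact ⟨by simp; linarith [ht.2], by simp; linarith [ht.1]⟩
    have hderiv : ∀ t ∈ Ioo 0 z, HasDerivAt (fun t => rogersL t + rogersL (1-t)) 0 t := by
      intro t ht
      have ht1 : t < 1 := lt_of_lt_of_le ht.2 hz1
      have h1 := rogersL_hasDeriv ht.1 ht1
      have hin := rogersL_hasDeriv (show 0 < 1 - t by linarith [ht.2])
        (show 1 - t < 1 by linarith [ht.1])
      have hid : HasDerivAt (fun t : ℝ => 1 - t) (-1) t := (hasDerivAt_id t).const_sub 1
      have h2 := hin.comp t hid
      simp only [Function.comp_def] at h2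
      have h3 := h1.add h2
      refine h3.congr_deriv ?_
      simp only [sub_sub_cancel]
      ring
    obtain ⟨c, _, hc⟩ := exists_hasDerivAt_eq_slope (fun t => rogersL t + rogersL (1-t))
      (fun _ => (0:ℝ)) h0 (hcont.mono (Icc_subset_Icc le_rfl hz1)) hderiv
    have hz' : z - 0 ≠ 0 := by simpa using ne_of_gt h0
    have := hc.symm
    rw [div_eq_zero_iff] at this
    rcases this with h | h
    · have : rogersL z + rogersL (1 - z) = rogersL 0 + rogersL (1 - 0) := by linarith [sub_eq_zero.1 h]
      rw [this]
      norm_num [rogersL_zero, rogersL_one]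
    · exact absurd h hz'

lemma deriv_cancel {t y : ℝ} (ht0 : 0 < t) (ht1 : t < 1) (hy0 : 0 < y) (hy1 : y < 1) :
    (-(1/2) * (Real.log (1 - t*y)/(t*y) + Real.log (t*y)/(1 - t*y))) * y
    + (-(1/2) * (Real.log (1 - t*(1-y)/(1-t*y))/(t*(1-y)/(1-t*y))
        + Real.log (t*(1-y)/(1-t*y))/(1 - t*(1-y)/(1-t*y)))) * ((1-y)/(1-t*y)^2)
    + (-(1/2) * (Real.log (1 - y*(1-t)/(1-t*y))/(y*(1-t)/(1-t*y))
        + Real.log (y*(1-t)/(1-t*y))/(1 - y*(1-t)/(1-t*y)))) * (y*(y-1)/(1-t*y)^2)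
    - (-(1/2) * (Real.log (1 - t)/t + Real.log t/(1 - t))) = 0 := by
  have hty : t*y < 1 := by nlinarith
  have h1t : (0:ℝ) < 1 - t := by linarith
  have h1y : (0:ℝ) < 1 - y := by linarith
  have h1ty : (0:ℝ) < 1 - t*y := by linarith
  have h1u : 1 - t*(1-y)/(1-t*y) = (1-t)/(1-t*y) := by
    field_simp
    ring
  have h1w : 1 - y*(1-t)/(1-t*y) = (1-y)/(1-t*y) := by
    field_simp [show 1 - y*t ≠ 0 by nlinarith]
    ring
  rw [h1u, h1w]
  rw [Real.log_mul (ne_of_gt ht0) (ne_of_gt hy0)]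
  rw [Real.log_div (by positivity : t*(1-y) ≠ 0) (ne_of_gt h1ty),
      Real.log_mul (ne_of_gt ht0) (ne_of_gt h1y)]
  rw [Real.log_div (by positivity : y*(1-t) ≠ 0) (ne_of_gt h1ty),
      Real.log_mul (ne_of_gt hy0) (ne_of_gt h1t)]
  rw [Real.log_div (ne_of_gt h1t) (ne_of_gt h1ty)]
  rw [Real.log_div (ne_of_gt h1y) (ne_of_gt h1ty)]
  field_simp
  ring

lemma pentagon {x y : ℝ} (hx0 : 0 < x) (hx1 : x < 1) (hy0 : 0 < y) (hy1 : y < 1) :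
    rogersL x + rogersL y =
      rogersL (x*y) + rogersL (x*(1-y)/(1-x*y)) + rogersL (y*(1-x)/(1-x*y)) := by
  have hxy1 : x*y < 1 := by nlinarith
  set Φ : ℝ → ℝ := fun t =>
    rogersL (t*y) + rogersL (t*(1-y)/(1-t*y)) + rogersL (y*(1-t)/(1-t*y)) - rogersL t with hΦ
  have hΦ0 : Φ 0 = rogersL y := by
    simp only [hΦ, zero_mul, sub_zero, mul_zero, zero_div, mul_one, div_one]
    rw [rogersL_zero]
    ring
  have hsub : ∀ t ∈ Icc (0:ℝ) x, (0:ℝ) < 1 - t*y := by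
    intro t ht
    have h1 : t*y ≤ x*y := mul_le_mul_of_nonneg_right ht.2 (le_of_lt hy0)
    linarith
  have hcont : ContinuousOn Φ (Icc 0 x) := by
    have c1 : ContinuousOn (fun t : ℝ => rogersL (t*y)) (Icc 0 x) := by
      refine rogersL_contOn.comp (continuous_id.mul continuous_const).continuousOn ?_
      intro t ht
      refine ⟨mul_nonneg ht.1 (le_of_lt hy0), ?_⟩
      show t*y ≤ 1
      have h1 : t*y ≤ x*y := mul_le_mul_of_nonneg_right ht.2 (le_of_lt hy0)
      nlinarith
    have c2 : ContinuousOn (fun t : ℝ => rogersL (t*(1-y)/(1-t*y))) (Icc 0 x) := by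
      refine rogersL_contOn.comp (ContinuousOn.div
        (continuous_id.mul continuous_const).continuousOn
        (continuous_const.sub (continuous_id.mul continuous_const)).continuousOn
        (fun t ht => ne_of_gt (hsub t ht))) ?_
      intro t ht
      have h1 := hsub t ht
      refine ⟨div_nonneg (mul_nonneg ht.1 (by linarith)) (le_of_lt h1), ?_⟩
      show t*(1-y)/(1-t*y) ≤ 1
      rw [div_le_one h1]
      have : t ≤ x := ht.2
      linarith
    have c3 : ContinuousOn (fun t : ℝ => rogersL (y*(1-t)/(1-t*y))) (Icc 0 x) := by
      refine rogersL_contOn.comp (ContinuousOn.div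
        (continuous_const.mul (continuous_const.sub continuous_id)).continuousOn
        (continuous_const.sub (continuous_id.mul continuous_const)).continuousOn
        (fun t ht => ne_of_gt (hsub t ht))) ?_
      intro t ht
      have h1 := hsub t ht
      have htx : t ≤ x := ht.2
      refine ⟨div_nonneg (mul_nonneg (le_of_lt hy0) (by linarith)) (le_of_lt h1), ?_⟩
      show y*(1-t)/(1-t*y) ≤ 1
      rw [div_le_one h1]
      nlinarith
    have c4 : ContinuousOn (fun t : ℝ => rogersL t) (Icc 0 x) :=
      rogersL_contOn.mono (Icc_subset_Icc le_rfl (le_of_lt hx1))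
    exact ((c1.add c2).add c3).sub c4
  have hderiv : ∀ t ∈ Ioo 0 x, HasDerivAt Φ 0 t := by
    intro t ht
    obtain ⟨ht0, htx⟩ := ht
    have ht1 : t < 1 := lt_trans htx hx1
    have hty1 : t*y < 1 := by nlinarith
    have h1ty : (0:ℝ) < 1 - t*y := by linarith
    have hty0 : 0 < t*y := mul_pos ht0 hy0
    have h1y : (0:ℝ) < 1 - y := by linarith
    have h1t : (0:ℝ) < 1 - t := by linarith
    have hu0 : 0 < t*(1-y)/(1-t*y) := div_pos (mul_pos ht0 h1y) h1ty
    have hu1 : t*(1-y)/(1-t*y) < 1 := by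
      rw [div_lt_one h1ty]
      nlinarith
    have hw0 : 0 < y*(1-t)/(1-t*y) := div_pos (mul_pos hy0 h1t) h1ty
    have hw1 : y*(1-t)/(1-t*y) < 1 := by
      rw [div_lt_one h1ty]
      nlinarith
    -- derivative of t ↦ rogersL (t*y)
    have d1 : HasDerivAt (fun t : ℝ => t*y) y t := hasDerivAt_mul_const y
    have L1 := (rogersL_hasDeriv hty0 hty1).comp t d1
    simp only [Function.comp_def] at L1
    -- derivative of t ↦ rogersL (t*(1-y)/(1-t*y))
    have uden : HasDerivAt (fun t : ℝ => 1 - t*y) (-y) t := by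
      simpa using (hasDerivAt_mul_const y).const_sub 1
    have unum : HasDerivAt (fun t : ℝ => t*(1-y)) (1-y) t := hasDerivAt_mul_const (1-y)
    have udiv := unum.div uden (ne_of_gt h1ty)
    have udiv' : HasDerivAt (fun t : ℝ => t*(1-y)/(1-t*y)) ((1-y)/(1-t*y)^2) t := by
      refine udiv.congr_deriv ?_
      field_simp
      ring
    have L2 := (rogersL_hasDeriv hu0 hu1).comp t udiv'
    simp only [Function.comp_def] at L2
    -- derivative of t ↦ rogersL (y*(1-t)/(1-t*y))
    have wnum : HasDerivAt (fun t : ℝ => y*(1-t)) (y * (-1)) t :=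
      ((hasDerivAt_id t).const_sub 1).const_mul y
    have wdiv := wnum.div uden (ne_of_gt h1ty)
    have wdiv' : HasDerivAt (fun t : ℝ => y*(1-t)/(1-t*y)) (y*(y-1)/(1-t*y)^2) t := by
      refine wdiv.congr_deriv ?_
      field_simp
      ring
    have L3 := (rogersL_hasDeriv hw0 hw1).comp t wdiv'
    simp only [Function.comp_def] at L3
    have L4 := rogersL_hasDeriv ht0 ht1
    have total := ((L1.add L2).add L3).sub L4
    have hval := deriv_cancel ht0 ht1 hy0 hy1
    rw [hval] at total
    exact total
  obtain ⟨c, _, hc⟩ := exists_hasDerivAt_eq_slope Φ (fun _ => (0:ℝ)) hx0 hcont hderiv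
  have hx' : x - 0 ≠ 0 := by simpa using ne_of_gt hx0
  have hΦx : Φ x = Φ 0 := by
    have := hc.symm
    rw [div_eq_zero_iff] at this
    rcases this with h | h
    · linarith [sub_eq_zero.1 h]
    · exact absurd h hx'
  rw [hΦ0] at hΦx
  have : rogersL (x*y) + rogersL (x*(1-y)/(1-x*y)) + rogersL (y*(1-x)/(1-x*y)) - rogersL x
      = rogersL y := hΦx
  linarith

noncomputable def ss (m : ℕ) (x : ℝ) : ℝ := Real.sin (x * (π / m))

lemma ss_pos {m : ℕ} (hm : 1 ≤ m) {x : ℝ} (h0 : 0 < x) (h1 : x < m) : 0 < ss m x := by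
  have hθ : 0 < π / m := by
    apply div_pos Real.pi_pos
    exact_mod_cast Nat.pos_of_ne_zero (by omega)
  refine Real.sin_pos_of_pos_of_lt_pi (mul_pos h0 hθ) ?_
  have hmR : (0:ℝ) < m := by exact_mod_cast Nat.pos_of_ne_zero (by omega)
  calc x * (π / m) < m * (π / m) := by
        exact mul_lt_mul_of_pos_right h1 hθ
    _ = π := by field_simp
lemma ss_m {m : ℕ} (hm : 1 ≤ m) : ss m m = 0 := by
  have hmR : ((m:ℝ)) ≠ 0 := by exact_mod_cast Nat.pos_of_ne_zero (by omega) |>.ne'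
  unfold ss
  rw [show (m:ℝ) * (π / m) = π by field_simp]
  exact Real.sin_pi

lemma ss_sym {m : ℕ} (hm : 1 ≤ m) (x : ℝ) : ss m ((m:ℝ) - x) = ss m x := by
  have hmR : ((m:ℝ)) ≠ 0 := by exact_mod_cast Nat.pos_of_ne_zero (by omega) |>.ne'
  unfold ss
  rw [sub_mul, show (m:ℝ) * (π / m) = π by field_simp, Real.sin_pi_sub]

lemma sinsin (A B : ℝ) : Real.sin A * Real.sin B = (Real.cos (B - A) - Real.cos (A + B))/2 := by
  rw [Real.cos_sub, Real.cos_add]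
  ring

lemma masterA (m : ℕ) (a c e : ℝ) :
    ss m a * ss m (a+e) - ss m c * ss m (c+e) = ss m (a-c) * ss m (a+c+e) := by
  unfold ss
  rw [sinsin, sinsin, sinsin]
  ring_nf

lemma masterB (m : ℕ) (a b c : ℝ) :
    ss m a * ss m b - ss m c * ss m (a+b-c) = ss m (a-c) * ss m (b-c) := by
  unfold ss
  rw [sinsin, sinsin, sinsin]
  ring_nf

noncomputable def aa (m : ℕ) (g k : ℝ) : ℝ := ss m 1 * ss m (g+1) / (ss m k * ss m (k+g))
noncomputable def dd (m : ℕ) (g k : ℝ) : ℝ := ss m 1 * ss m (k+g) / (ss m (g+1) * ss m k)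

set_option maxHeartbeats 1000000 in
lemma step {m : ℕ} (hm : 4 ≤ m) {g k : ℝ} (hg : 1 ≤ g) (hk : 2 ≤ k) (hkg : k + g + 2 ≤ m) :
    rogersL (aa m g k) + rogersL (dd m g k)
      = rogersL (aa m 0 k) + rogersL (aa m (g-1) (k+1)) + rogersL (dd m g (k+1)) := by
  have hm1 : 1 ≤ m := by omega
  have hmR : (4:ℝ) ≤ m := by exact_mod_cast hm
  have p1 : 0 < ss m 1 := ss_pos hm1 one_pos (by linarith)
  have pg1 : 0 < ss m (g+1) := ss_pos hm1 (by linarith) (by linarith)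
  have pg : 0 < ss m g := ss_pos hm1 (by linarith) (by linarith)
  have pk : 0 < ss m k := ss_pos hm1 (by linarith) (by linarith)
  have pk1 : 0 < ss m (k+1) := ss_pos hm1 (by linarith) (by linarith)
  have pkm : 0 < ss m (k-1) := ss_pos hm1 (by linarith) (by linarith)
  have pkg : 0 < ss m (k+g) := ss_pos hm1 (by linarith) (by linarith)
  have pkg1 : 0 < ss m (k+g+1) := ss_pos hm1 (by linarith) (by linarith)
  have ne1 := ne_of_gt p1
  have neg1 := ne_of_gt pg1
  have neg := ne_of_gt pg
  have nek := ne_of_gt pk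
  have nek1 := ne_of_gt pk1
  have nekm := ne_of_gt pkm
  have nekg := ne_of_gt pkg
  have nekg1 := ne_of_gt pkg1
  have hA : ss m k * ss m (k+g) - ss m 1 * ss m (g+1) = ss m (k-1) * ss m (k+g+1) := by
    have h := masterA m k 1 g
    rw [show (1:ℝ)+g = g+1 from by ring, show k+1+g = k+g+1 from by ring] at h
    exact h
  have hB : ss m (g+1) * ss m k - ss m 1 * ss m (k+g) = ss m g * ss m (k-1) := by
    have h := masterB m (g+1) k 1
    rw [show g+1+k-1 = k+g from by ring, show g+1-1 = g from by ring] at h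
    exact h
  have hC : ss m k * ss m k - ss m 1 * ss m 1 = ss m (k-1) * ss m (k+1) := by
    have h := masterA m k 1 0
    rw [show k+(0:ℝ) = k from by ring, show (1:ℝ)+0 = 1 from by ring,
      show k+1+(0:ℝ) = k+1 from by ring] at h
    exact h
  have hx0 : 0 < aa m g k := div_pos (mul_pos p1 pg1) (mul_pos pk pkg)
  have hx1 : aa m g k < 1 := by
    unfold aa
    rw [div_lt_one (mul_pos pk pkg)]
    nlinarith [mul_pos pkm pkg1]
  have hy0 : 0 < dd m g k := div_pos (mul_pos p1 pkg) (mul_pos pg1 pk)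
  have hy1 : dd m g k < 1 := by
    unfold dd
    rw [div_lt_one (mul_pos pg1 pk)]
    nlinarith [mul_pos pg pkm]
  have e1 : aa m g k * dd m g k = aa m 0 k := by
    unfold aa dd
    simp only [zero_add, add_zero]
    rw [div_mul_div_comm, div_eq_div_iff (by exact mul_ne_zero (mul_ne_zero nek nekg) (mul_ne_zero neg1 nek)) (mul_ne_zero nek nek)]
    ring
  have hdd1 : 1 - dd m g k = ss m g * ss m (k-1)/(ss m (g+1) * ss m k) := by
    unfold dd
    rw [one_sub_div (mul_ne_zero neg1 nek), hB]
  have haa1 : 1 - aa m g k = ss m (k-1) * ss m (k+g+1)/(ss m k * ss m (k+g)) := by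
    unfold aa
    rw [one_sub_div (mul_ne_zero nek nekg), hA]
  have hxy : 1 - aa m g k * dd m g k = ss m (k-1) * ss m (k+1)/(ss m k * ss m k) := by
    rw [e1]
    unfold aa
    simp only [zero_add, add_zero]
    rw [one_sub_div (mul_ne_zero nek nek), hC]
  have e2 : aa m g k * (1 - dd m g k)/(1 - aa m g k * dd m g k) = aa m (g-1) (k+1) := by
    rw [hdd1, hxy]
    unfold aa
    rw [show g-1+1 = g from by ring, show k+1+(g-1) = k+g from by ring]
    field_simp
  have e3 : dd m g k * (1 - aa m g k)/(1 - aa m g k * dd m g k) = dd m g (k+1) := by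
    rw [haa1, hxy]
    unfold dd
    rw [show k+1+g = k+g+1 from by ring]
    field_simp
  rw [pentagon hx0 hx1 hy0 hy1, e2, e3, e1]

lemma step_top {m : ℕ} (hm : 4 ≤ m) {g k : ℝ} (hg : 1 ≤ g) (hk : 2 ≤ k) (heq : k + g + 1 = m) :
    rogersL (aa m g k) + rogersL (dd m g k)
      = rogersL (aa m 0 k) + rogersL (aa m (g-1) (k+1)) + rogersL (dd m g (k+1)) := by
  have hm1 : 1 ≤ m := by omega
  have hmR : (4:ℝ) ≤ m := by exact_mod_cast hm
  have p1 : 0 < ss m 1 := ss_pos hm1 one_pos (by linarith)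
  have pg1 : 0 < ss m (g+1) := ss_pos hm1 (by linarith) (by linarith)
  have pg : 0 < ss m g := ss_pos hm1 (by linarith) (by linarith)
  have h1 : ss m (k+g) = ss m 1 := by
    rw [show k+g = (m:ℝ) - 1 from by linarith]
    exact ss_sym hm1 1
  have h2 : ss m k = ss m (g+1) := by
    rw [show k = (m:ℝ) - (g+1) from by linarith]
    exact ss_sym hm1 (g+1)
  have h3 : ss m (k+1) = ss m g := by
    rw [show k+1 = (m:ℝ) - g from by linarith]
    exact ss_sym hm1 g
  have h4 : ss m (k+g+1) = 0 := by
    rw [show k+g+1 = (m:ℝ) from by linarith]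
    exact ss_m hm1
  have haaone : aa m g k = 1 := by
    unfold aa
    rw [h1, h2, mul_comm (ss m 1) (ss m (g+1))]
    exact div_self (mul_ne_zero (ne_of_gt pg1) (ne_of_gt p1))
  have hddaa : dd m g k = aa m 0 k := by
    unfold dd aa
    simp only [zero_add, add_zero]
    rw [h1, h2]
  have haag1 : aa m (g-1) (k+1) = 1 := by
    unfold aa
    rw [show g-1+1 = g from by ring, show k+1+(g-1) = k+g from by ring, h1, h3,
      mul_comm (ss m 1) (ss m g)]
    exact div_self (mul_ne_zero (ne_of_gt pg) (ne_of_gt p1))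
  have hddz : dd m g (k+1) = 0 := by
    unfold dd
    rw [show k+1+g = k+g+1 from by ring, h4]
    simp
  rw [haaone, hddaa, haag1, hddz, rogersL_zero]
  ring

noncomputable def WW (m h : ℕ) : ℝ :=
  ∑ i ∈ Finset.range (m - h - 2), rogersL (aa m (h:ℝ) ((i:ℝ)+2))

lemma stepN {m : ℕ} (hm : 4 ≤ m) (h i : ℕ) (hcond : i + h + 4 ≤ m) :
    rogersL (aa m ((h:ℝ)+1) ((i:ℝ)+2)) + rogersL (dd m ((h:ℝ)+1) ((i:ℝ)+2))
      = rogersL (aa m 0 ((i:ℝ)+2)) + rogersL (aa m (h:ℝ) ((i:ℝ)+3))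
        + rogersL (dd m ((h:ℝ)+1) ((i:ℝ)+3)) := by
  have hg : (1:ℝ) ≤ (h:ℝ)+1 := by linarith [Nat.cast_nonneg (α := ℝ) h]
  have hk : (2:ℝ) ≤ (i:ℝ)+2 := by linarith [Nat.cast_nonneg (α := ℝ) i]
  rcases eq_or_lt_of_le hcond with he | hl
  · have heq : ((i:ℝ)+2) + ((h:ℝ)+1) + 1 = (m:ℝ) := by
      push_cast [← he]
      ring
    have := step_top hm hg hk heq
    rw [show (h:ℝ)+1-1 = (h:ℝ) from by ring, show (i:ℝ)+2+1 = (i:ℝ)+3 from by ring] at this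
    exact this
  · have hkg : ((i:ℝ)+2) + ((h:ℝ)+1) + 2 ≤ (m:ℝ) := by
      have : ((i:ℝ) + (h:ℝ) + 5) ≤ (m:ℝ) := by exact_mod_cast hl
      linarith
    have := step hm hg hk hkg
    rw [show (h:ℝ)+1-1 = (h:ℝ) from by ring, show (i:ℝ)+2+1 = (i:ℝ)+3 from by ring] at this
    exact this

lemma cast_sub3 {m h : ℕ} (h3 : h + 3 ≤ m) : ((m - h - 3 : ℕ):ℝ) = (m:ℝ) - (h:ℝ) - 3 := by
  rw [show m - h - 3 = m - (h+3) from by omega, Nat.cast_sub h3]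
  push_cast
  ring

lemma dd_top {m : ℕ} (hm : 4 ≤ m) (h : ℕ) (hh : h ≤ m - 4) :
    dd m ((h:ℝ)+1) (((m - h - 3 : ℕ):ℝ)+2) = 0 := by
  unfold dd
  rw [cast_sub3 (by omega)]
  rw [show (m:ℝ) - (h:ℝ) - 3 + 2 + ((h:ℝ)+1) = (m:ℝ) from by ring]
  rw [ss_m (by omega)]
  simp

lemma refl2 {m : ℕ} (hm : 4 ≤ m) (h : ℕ) (hh : h ≤ m - 4) :
    rogersL (dd m ((h:ℝ)+1) 2) + rogersL (aa m (h:ℝ) 2) = π^2/6 := by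
  have hm1 : 1 ≤ m := by omega
  have hmR : (4:ℝ) ≤ m := by exact_mod_cast hm
  have hhR : (h:ℝ) ≤ (m:ℝ) - 4 := by
    have : (h:ℝ) + 4 ≤ m := by exact_mod_cast Nat.add_le_of_le_sub (by omega) hh
    linarith
  have p1 : 0 < ss m 1 := ss_pos hm1 one_pos (by linarith)
  have p2 : 0 < ss m 2 := ss_pos hm1 two_pos (by linarith)
  have ph1 : 0 < ss m ((h:ℝ)+1) := ss_pos hm1 (by positivity) (by linarith)
  have ph2 : 0 < ss m ((h:ℝ)+2) := ss_pos hm1 (by positivity) (by linarith)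
  have ph3 : 0 < ss m ((h:ℝ)+3) := ss_pos hm1 (by positivity) (by linarith)
  have hB : ss m ((h:ℝ)+2) * ss m 2 - ss m 1 * ss m ((h:ℝ)+3) = ss m ((h:ℝ)+1) * ss m 1 := by
    have hmb := masterB m ((h:ℝ)+2) 2 1
    rw [show (h:ℝ)+2+2-1 = (h:ℝ)+3 from by ring, show (h:ℝ)+2-1 = (h:ℝ)+1 from by ring,
      show (2:ℝ)-1 = 1 from by ring] at hmb
    exact hmb
  have hdd : dd m ((h:ℝ)+1) 2 = ss m 1 * ss m ((h:ℝ)+3) / (ss m ((h:ℝ)+2) * ss m 2) := by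
    unfold dd
    rw [show (2:ℝ)+((h:ℝ)+1) = (h:ℝ)+3 from by ring, show (h:ℝ)+1+1 = (h:ℝ)+2 from by ring]
  have hcompl : 1 - dd m ((h:ℝ)+1) 2 = aa m (h:ℝ) 2 := by
    rw [hdd, one_sub_div (by positivity), hB]
    unfold aa
    rw [show (2:ℝ)+(h:ℝ) = (h:ℝ)+2 from by ring]
    rw [div_eq_div_iff (by positivity) (by positivity)]
    ring
  have hd0 : 0 < dd m ((h:ℝ)+1) 2 := by
    rw [hdd]
    positivity
  have hd1 : dd m ((h:ℝ)+1) 2 ≤ 1 := by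
    have haa : 0 ≤ aa m (h:ℝ) 2 := by
      unfold aa
      rw [show (2:ℝ)+(h:ℝ) = (h:ℝ)+2 from by ring]
      positivity
    linarith [hcompl ▸ haa]
  have := rogersL_reflect (le_of_lt hd0) hd1
  rw [hcompl] at this
  exact this

lemma Wrec {m : ℕ} (hm : 4 ≤ m) (h : ℕ) (hh : h ≤ m - 4) :
    WW m (h+1) = (∑ i ∈ Finset.range (m - h - 3), rogersL (aa m 0 ((i:ℝ)+2)))
      + WW m h - π^2/6 := by
  set N := m - h - 3 with hN
  have hNpos : 1 ≤ N := by omega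
  have hsum : ∑ i ∈ Finset.range N, (rogersL (aa m ((h:ℝ)+1) ((i:ℝ)+2))
        + rogersL (dd m ((h:ℝ)+1) ((i:ℝ)+2)))
      = ∑ i ∈ Finset.range N, (rogersL (aa m 0 ((i:ℝ)+2)) + rogersL (aa m (h:ℝ) ((i:ℝ)+3))
        + rogersL (dd m ((h:ℝ)+1) ((i:ℝ)+3))) := by
    refine Finset.sum_congr rfl fun i hi => ?_
    have hi' : i + h + 4 ≤ m := by
      have := Finset.mem_range.1 hi
      omega
    exact stepN hm h i hi'
  have hWh1 : WW m (h+1) = ∑ i ∈ Finset.range N, rogersL (aa m ((h:ℝ)+1) ((i:ℝ)+2)) := by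
    unfold WW
    rw [show m - (h+1) - 2 = N from by omega]
    refine Finset.sum_congr rfl fun i _ => ?_
    push_cast
    ring_nf
  have htel : ∑ i ∈ Finset.range N, (rogersL (dd m ((h:ℝ)+1) ((i:ℝ)+2))
        - rogersL (dd m ((h:ℝ)+1) ((i:ℝ)+3)))
      = rogersL (dd m ((h:ℝ)+1) 2) := by
    have h1 := Finset.sum_range_sub' (f := fun i : ℕ => rogersL (dd m ((h:ℝ)+1) ((i:ℝ)+2))) N
    have h2 : ∀ i : ℕ, rogersL (dd m ((h:ℝ)+1) (((i+1:ℕ):ℝ)+2))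
        = rogersL (dd m ((h:ℝ)+1) ((i:ℝ)+3)) := by
      intro i
      push_cast
      ring_nf
    simp only [h2] at h1
    rw [h1]
    rw [show ((0:ℕ):ℝ)+2 = 2 from by norm_num]
    rw [dd_top hm h hh, rogersL_zero, sub_zero]
  have hshift : WW m h = (∑ i ∈ Finset.range N, rogersL (aa m (h:ℝ) ((i:ℝ)+3)))
      + rogersL (aa m (h:ℝ) 2) := by
    unfold WW
    rw [show m - h - 2 = N + 1 from by omega]
    rw [Finset.sum_range_succ' (fun i : ℕ => rogersL (aa m (h:ℝ) ((i:ℝ)+2))) N]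
    congr 1
    · refine Finset.sum_congr rfl fun i _ => ?_
      push_cast
      ring_nf
    · norm_num
  have hrefl := refl2 hm h hh
  have expand1 : ∑ i ∈ Finset.range N, (rogersL (aa m ((h:ℝ)+1) ((i:ℝ)+2))
        + rogersL (dd m ((h:ℝ)+1) ((i:ℝ)+2)))
      = (∑ i ∈ Finset.range N, rogersL (aa m ((h:ℝ)+1) ((i:ℝ)+2)))
        + ∑ i ∈ Finset.range N, rogersL (dd m ((h:ℝ)+1) ((i:ℝ)+2)) :=
    Finset.sum_add_distrib
  have expand2 : ∑ i ∈ Finset.range N, (rogersL (aa m 0 ((i:ℝ)+2)) + rogersL (aa m (h:ℝ) ((i:ℝ)+3))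
        + rogersL (dd m ((h:ℝ)+1) ((i:ℝ)+3)))
      = ((∑ i ∈ Finset.range N, rogersL (aa m 0 ((i:ℝ)+2)))
        + ∑ i ∈ Finset.range N, rogersL (aa m (h:ℝ) ((i:ℝ)+3)))
        + ∑ i ∈ Finset.range N, rogersL (dd m ((h:ℝ)+1) ((i:ℝ)+3)) := by
    rw [← Finset.sum_add_distrib, ← Finset.sum_add_distrib]
  have expand3 : ∑ i ∈ Finset.range N, (rogersL (dd m ((h:ℝ)+1) ((i:ℝ)+2))
        - rogersL (dd m ((h:ℝ)+1) ((i:ℝ)+3)))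
      = (∑ i ∈ Finset.range N, rogersL (dd m ((h:ℝ)+1) ((i:ℝ)+2)))
        - ∑ i ∈ Finset.range N, rogersL (dd m ((h:ℝ)+1) ((i:ℝ)+3)) :=
    Finset.sum_sub_distrib _ _
  rw [expand1] at hsum
  rw [expand2] at hsum
  rw [expand3] at htel
  rw [hWh1]
  linarith [hsum, htel, hshift, hrefl]

lemma Wclosed {m : ℕ} (hm : 4 ≤ m) : ∀ H, H ≤ m - 3 →
    WW m H = WW m 0 + (∑ h ∈ Finset.range H, ∑ i ∈ Finset.range (m - h - 3),
      rogersL (aa m 0 ((i:ℝ)+2))) - (H:ℝ) * (π^2/6) := by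
  intro H
  induction H with
  | zero => simp
  | succ H ih =>
    intro hH
    have hH' : H ≤ m - 4 := by omega
    rw [Wrec hm H hH', ih (by omega), Finset.sum_range_succ]
    push_cast
    ring

lemma Wtop {m : ℕ} (hm : 4 ≤ m) : WW m (m-3) = π^2/6 := by
  have hm1 : 1 ≤ m := by omega
  have hmR : (4:ℝ) ≤ m := by exact_mod_cast hm
  have p1 : 0 < ss m 1 := ss_pos hm1 one_pos (by linarith)
  have p2 : 0 < ss m 2 := ss_pos hm1 two_pos (by linarith)
  unfold WW
  rw [show m - (m-3) - 2 = 1 from by omega, Finset.sum_range_one]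
  have h1 : aa m ((m-3:ℕ):ℝ) (((0:ℕ):ℝ)+2) = 1 := by
    unfold aa
    rw [Nat.cast_sub (by omega : 3 ≤ m), Nat.cast_zero]
    push_cast
    rw [show (0:ℝ)+2 = 2 from by ring]
    rw [show (m:ℝ)-3+1 = (m:ℝ)-2 from by ring, show (2:ℝ)+((m:ℝ)-3) = (m:ℝ)-1 from by ring]
    rw [ss_sym hm1 2, ss_sym hm1 1, mul_comm (ss m 2) (ss m 1)]
    exact div_self (ne_of_gt (mul_pos p1 p2))
  rw [h1, rogersL_one]

lemma W0split {m : ℕ} (hm : 4 ≤ m) :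
    WW m 0 = (∑ i ∈ Finset.range (m-3), rogersL (aa m 0 ((i:ℝ)+2))) + π^2/6 := by
  have hm1 : 1 ≤ m := by omega
  have hmR : (4:ℝ) ≤ m := by exact_mod_cast hm
  have p1 : 0 < ss m 1 := ss_pos hm1 one_pos (by linarith)
  unfold WW
  rw [show m - 0 - 2 = (m-3)+1 from by omega, Finset.sum_range_succ, Nat.cast_zero]
  congr 1
  have h1 : aa m 0 (((m-3:ℕ):ℝ)+2) = 1 := by
    unfold aa
    simp only [zero_add, add_zero]
    rw [Nat.cast_sub (by omega : 3 ≤ m)]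
    push_cast
    rw [show (m:ℝ)-3+2 = (m:ℝ)-1 from by ring, ss_sym hm1 1]
    exact div_self (ne_of_gt (mul_pos p1 p1))
  rw [h1, rogersL_one]

lemma swap_sum (N : ℕ) (f : ℕ → ℝ) :
    ∑ h ∈ Finset.range N, ∑ i ∈ Finset.range (N - h), f i
      = ∑ i ∈ Finset.range N, ((N - i : ℕ):ℝ) * f i := by
  induction N with
  | zero => simp
  | succ N ih =>
    rw [Finset.sum_range_succ' (fun h => ∑ i ∈ Finset.range (N + 1 - h), f i) N]
    have h1 : ∀ h : ℕ, N + 1 - (h+1) = N - h := fun h => by omega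
    simp only [h1, Nat.sub_zero]
    rw [ih]
    have hsplit : ∑ i ∈ Finset.range (N+1), ((N+1-i : ℕ):ℝ) * f i
        = (∑ i ∈ Finset.range (N+1), ((N-i : ℕ):ℝ) * f i)
          + ∑ i ∈ Finset.range (N+1), f i := by
      rw [← Finset.sum_add_distrib]
      refine Finset.sum_congr rfl fun i hi => ?_
      have hiN : i ≤ N := by
        have := Finset.mem_range.1 hi
        omega
      rw [show N+1-i = (N-i)+1 from by omega]
      push_cast
      ring
    rw [hsplit, Finset.sum_range_succ (fun i => ((N-i:ℕ):ℝ) * f i) N]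
    simp

lemma aa_sym {m : ℕ} (hm : 4 ≤ m) (i : ℕ) (hi : i < m - 3) :
    aa m 0 (((m-4-i:ℕ):ℝ)+2) = aa m 0 ((i:ℝ)+2) := by
  have hm1 : 1 ≤ m := by omega
  have hc : ((m-4-i:ℕ):ℝ) = (m:ℝ)-4-(i:ℝ) := by
    rw [show m-4-i = m - (4+i) from by omega, Nat.cast_sub (by omega : 4+i ≤ m)]
    push_cast
    ring
  unfold aa
  simp only [zero_add, add_zero]
  rw [hc, show (m:ℝ)-4-(i:ℝ)+2 = (m:ℝ) - ((i:ℝ)+2) from by ring, ss_sym hm1 ((i:ℝ)+2)]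

lemma Tval {m : ℕ} (hm : 4 ≤ m) :
    (m:ℝ) * (∑ i ∈ Finset.range (m-3), rogersL (aa m 0 ((i:ℝ)+2)))
      = 2*((m:ℝ)-3)*(π^2/6) := by
  have hW := Wclosed hm (m-3) le_rfl
  rw [Wtop hm, W0split hm] at hW
  have hswap : ∑ h ∈ Finset.range (m-3), ∑ i ∈ Finset.range (m - h - 3),
        rogersL (aa m 0 ((i:ℝ)+2))
      = ∑ i ∈ Finset.range (m-3), ((m - i - 3 : ℕ):ℝ) * rogersL (aa m 0 ((i:ℝ)+2)) := by
    have hs := swap_sum (m-3) (fun i => rogersL (aa m 0 ((i:ℝ)+2)))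
    have hr : ∀ h : ℕ, m - 3 - h = m - h - 3 := fun h => by omega
    simp only [hr] at hs
    exact hs
  rw [hswap] at hW
  have E1 : ∑ i ∈ Finset.range (m-3), (((m-i-3:ℕ):ℝ)+1) * rogersL (aa m 0 ((i:ℝ)+2))
      = ((m-3:ℕ):ℝ)*(π^2/6) := by
    have hd : ∑ i ∈ Finset.range (m-3), (((m-i-3:ℕ):ℝ)+1) * rogersL (aa m 0 ((i:ℝ)+2))
        = (∑ i ∈ Finset.range (m-3), ((m-i-3:ℕ):ℝ) * rogersL (aa m 0 ((i:ℝ)+2)))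
          + ∑ i ∈ Finset.range (m-3), rogersL (aa m 0 ((i:ℝ)+2)) := by
      rw [← Finset.sum_add_distrib]
      exact Finset.sum_congr rfl fun i _ => by ring
    rw [hd]
    linarith [hW]
  have E2 : ∑ i ∈ Finset.range (m-3), ((i:ℝ)+2) * rogersL (aa m 0 ((i:ℝ)+2))
      = ((m-3:ℕ):ℝ)*(π^2/6) := by
    rw [← E1]
    have hrefl := Finset.sum_range_reflect
      (fun i => (((m-i-3:ℕ):ℝ)+1) * rogersL (aa m 0 ((i:ℝ)+2))) (m-3)
    rw [← hrefl]
    refine Finset.sum_congr rfl fun i hi => ?_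
    have hi' := Finset.mem_range.1 hi
    rw [show m - 3 - 1 - i = m - 4 - i from by omega]
    rw [show m - (m - 4 - i) - 3 = i+1 from by omega]
    rw [aa_sym hm i hi']
    push_cast
    ring
  have E3 : ∑ i ∈ Finset.range (m-3), (m:ℝ) * rogersL (aa m 0 ((i:ℝ)+2))
      = 2*((m-3:ℕ):ℝ)*(π^2/6) := by
    have hd : ∑ i ∈ Finset.range (m-3), (m:ℝ) * rogersL (aa m 0 ((i:ℝ)+2))
        = (∑ i ∈ Finset.range (m-3), (((m-i-3:ℕ):ℝ)+1) * rogersL (aa m 0 ((i:ℝ)+2)))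
          + ∑ i ∈ Finset.range (m-3), ((i:ℝ)+2) * rogersL (aa m 0 ((i:ℝ)+2)) := by
      rw [← Finset.sum_add_distrib]
      refine Finset.sum_congr rfl fun i hi => ?_
      have hi' := Finset.mem_range.1 hi
      have hc : ((m-i-3:ℕ):ℝ) = (m:ℝ)-3-(i:ℝ) := by
        rw [show m-i-3 = m - (3+i) from by omega, Nat.cast_sub (by omega : 3+i ≤ m)]
        push_cast
        ring
      rw [hc]
      ring
    rw [hd, E1, E2]
    ring
  rw [Finset.mul_sum]
  rw [E3, Nat.cast_sub (by omega : 3 ≤ m)]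
  norm_num

lemma term_reflect {m : ℕ} (hm : 4 ≤ m) (i : ℕ) (hi : i < m - 3) :
    rogersL (1 - aa m 0 ((i:ℝ)+2)) = π^2/6 - rogersL (aa m 0 ((i:ℝ)+2)) := by
  have hm1 : 1 ≤ m := by omega
  have hmR : (4:ℝ) ≤ m := by exact_mod_cast hm
  have hi4 : (i:ℝ) + 4 ≤ m := by exact_mod_cast (by omega : i + 4 ≤ m)
  have p1 : 0 < ss m 1 := ss_pos hm1 one_pos (by linarith)
  have pk : 0 < ss m ((i:ℝ)+2) := ss_pos hm1 (by positivity) (by linarith)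
  have pk1 : 0 < ss m ((i:ℝ)+1) := ss_pos hm1 (by positivity) (by linarith)
  have pk3 : 0 < ss m ((i:ℝ)+3) := ss_pos hm1 (by positivity) (by linarith)
  have hA : ss m ((i:ℝ)+2) * ss m ((i:ℝ)+2) - ss m 1 * ss m 1
      = ss m ((i:ℝ)+1) * ss m ((i:ℝ)+3) := by
    have h := masterA m ((i:ℝ)+2) 1 0
    rw [show (i:ℝ)+2+0 = (i:ℝ)+2 from by ring, show (1:ℝ)+0 = 1 from by ring,
      show (i:ℝ)+2-1 = (i:ℝ)+1 from by ring, show (i:ℝ)+2+1+0 = (i:ℝ)+3 from by ring] at h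
    exact h
  have hy0 : 0 < aa m 0 ((i:ℝ)+2) := by
    unfold aa
    simp only [zero_add, add_zero]
    positivity
  have hy1 : aa m 0 ((i:ℝ)+2) ≤ 1 := by
    unfold aa
    simp only [zero_add, add_zero]
    rw [div_le_one (mul_pos pk pk)]
    nlinarith [mul_pos pk1 pk3]
  have := rogersL_reflect (le_of_lt hy0) hy1
  linarith

lemma aa_sin {n : ℕ} (i : ℕ) :
    aa (n+3) 0 ((i:ℝ)+2)
      = Real.sin (π / (n + 3)) ^ 2 / Real.sin (π * ((i:ℝ) + 2) / (n + 3)) ^ 2 := by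
  unfold aa ss
  simp only [zero_add, add_zero]
  push_cast
  rw [show (1:ℝ) * (π/((n:ℝ)+3)) = π/((n:ℝ)+3) from by ring]
  rw [show ((i:ℝ)+2) * (π/((n:ℝ)+3)) = π * ((i:ℝ)+2)/((n:ℝ)+3) from by ring]
  rw [pow_two, pow_two]

end RogersAux

/-- With `x_j = 1 − sin²(π/(n+3))/sin²(π(j+1)/(n+3))`,
one has `(n+3)·∑_{j=1}^n L(x_j) = (π²/6)·n(n+1)`. -/
theorem rogers_sum_identity' (n : ℕ) (hn : 1 ≤ n) :
    ((n : ℝ) + 3) * ∑ j ∈ Finset.Icc 1 n,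
        rogersL (1 - Real.sin (π / (n + 3)) ^ 2 / Real.sin (π * (j + 1) / (n + 3)) ^ 2)
      = π ^ 2 / 6 * (n * (n + 1)) := by
  open RogersAux in
  have hm : 4 ≤ n + 3 := by omega
  have hsum : ∑ j ∈ Finset.Icc 1 n,
      rogersL (1 - Real.sin (π / (n + 3)) ^ 2 / Real.sin (π * (j + 1) / (n + 3)) ^ 2)
      = ∑ i ∈ Finset.range n,
        rogersL (1 - Real.sin (π / (n + 3)) ^ 2 / Real.sin (π * ((1+i:ℕ) + 1) / (n + 3)) ^ 2) := by
    rw [← Finset.Ico_add_one_right_eq_Icc, Finset.sum_Ico_eq_sum_range]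
    simp
  rw [hsum]
  have hterm : ∀ i ∈ Finset.range n,
      rogersL (1 - Real.sin (π / (n + 3)) ^ 2 / Real.sin (π * ((1+i:ℕ) + 1) / (n + 3)) ^ 2)
      = π^2/6 - rogersL (aa (n+3) 0 ((i:ℝ)+2)) := by
    intro i hi
    have hi' : i < (n+3) - 3 := by
      have := Finset.mem_range.1 hi
      omega
    rw [← term_reflect hm i hi']
    congr 2
    rw [aa_sin]
    congr 3
    push_cast
    ring
  rw [Finset.sum_congr rfl hterm, Finset.sum_sub_distrib, Finset.sum_const,
    Finset.card_range]
  have hT := Tval hm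
  rw [show (n+3) - 3 = n from by omega] at hT
  have hc : ((n+3:ℕ):ℝ) = (n:ℝ)+3 := by push_cast; ring
  rw [hc] at hT
  set T := ∑ i ∈ Finset.range n, rogersL (aa (n+3) 0 ((i:ℝ)+2)) with hTdef
  push_cast
  linear_combination (-1 : ℝ) * hT
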